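/- arXiv:2104.06731 — 3 statements merged into one kernel-verified Lean document; each statement's English description precedes it below -/
import Mathlib

section
/- For every real polynomial p of degree at most 5, the integral of p over [x_i, x_{i+1}] equals (Δx/240) · (p(x_{i-1}) + 119·p(x_i) + 119·p(x_{i+1}) + p(x_{i+2}) + 22·Δx·p'(x_i) − 22·Δx·p'(x_{i+1})). (Exactness of the HWENO6 quadrature q₀ obtained from the quintic Hermite interpolant on the big stencil S₀.) -/
/-- Exactness of the HWENO6 quadrature `q₀` obtained from the quintic Hermite
interpolant on the big stencil `S₀ = {x_{i-1}, x_i, x_{i+1}, x_{i+2}}`: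
for every real polynomial of degree at most 5, the integral over
`[x_i, x_{i+1}]` equals the Hermite quadrature formula. -/
theorem hweno6_quadrature_q0_exact (Δx : ℝ) (hΔx : 0 < Δx) (xi : ℝ)
    (p : Polynomial ℝ) (hp : p.degree ≤ 5) :
    ∫ x in xi..(xi + Δx), p.eval x =
      (Δx / 240) *
        (p.eval (xi - Δx) + 119 * p.eval xi + 119 * p.eval (xi + Δx) +
          p.eval (xi + 2 * Δx) + 22 * Δx * p.derivative.eval xi -
          22 * Δx * p.derivative.eval (xi + Δx)) := by
  have hnd : p.natDegree < 6 :=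
    lt_of_le_of_lt (Polynomial.natDegree_le_of_degree_le hp) (by norm_num)
  have heval : ∀ x : ℝ, p.eval x = ∑ k ∈ Finset.range 6, p.coeff k * x ^ k := fun x =>
    Polynomial.eval_eq_sum_range' hnd x
  have hndd : p.derivative.natDegree < 5 :=
    lt_of_le_of_lt (Polynomial.natDegree_derivative_le p)
      (by omega : p.natDegree - 1 < 5)
  have hdeval : ∀ x : ℝ, p.derivative.eval x =
      ∑ k ∈ Finset.range 5, p.coeff (k + 1) * (k + 1) * x ^ k := fun x => by
    rw [Polynomial.eval_eq_sum_range' hndd x]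
    refine Finset.sum_congr rfl fun k _ => ?_
    rw [Polynomial.coeff_derivative]
  have hint : ∫ x in xi..(xi + Δx), p.eval x =
      ∑ k ∈ Finset.range 6, p.coeff k * (((xi + Δx) ^ (k + 1) - xi ^ (k + 1)) / (k + 1)) := by
    simp_rw [heval]
    rw [intervalIntegral.integral_finset_sum]
    · refine Finset.sum_congr rfl fun k _ => ?_
      rw [intervalIntegral.integral_const_mul, integral_pow]
    · intro k _
      exact ((continuous_const.mul (continuous_pow k)).intervalIntegrable _ _)
  rw [hint]
  simp_rw [heval, hdeval]
  simp only [Finset.sum_range_succ, Finset.sum_range_zero]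
  push_cast
  ring
end

section
/- For every real polynomial p of degree at most 3, the integral of p over [x_i, x_{i+1}] equals (Δx/24) · (p(x_{i-1}) + 16·p(x_i) + 7·p(x_{i+1}) + 6·Δx·p'(x_i)). (Exactness of the quadrature q₁ obtained from the cubic Hermite interpolant on the small stencil S₁ = {x_{i-1}, x_i, x_{i+1}} with derivative data at x_i.) -/
/-- Exactness of the quadrature `q₁` obtained from the cubic Hermite interpolant
on the small stencil `S₁ = {x_{i-1}, x_i, x_{i+1}}` with derivative data at `x_i`:
for every real polynomial of degree at most 3, the integral over `[x_i, x_{i+1}]`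
equals `(Δx/24)(p(x_{i-1}) + 16 p(x_i) + 7 p(x_{i+1}) + 6 Δx p'(x_i))`. -/
theorem hweno6_quadrature_q1_exact (Δx : ℝ) (hΔx : 0 < Δx) (xi : ℝ)
    (p : Polynomial ℝ) (hp : p.degree ≤ 3) :
    ∫ x in xi..(xi + Δx), p.eval x =
      (Δx / 24) *
        (p.eval (xi - Δx) + 16 * p.eval xi + 7 * p.eval (xi + Δx) +
          6 * Δx * p.derivative.eval xi) := by
  set a := p.coeff 0
  set b := p.coeff 1
  set c := p.coeff 2
  set d := p.coeff 3
  have hnd : p.natDegree < 4 := by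
    have := Polynomial.natDegree_le_iff_degree_le (n := 3) |>.mpr hp
    omega
  have heval : ∀ x : ℝ, p.eval x = a + b * x + c * x ^ 2 + d * x ^ 3 := by
    intro x
    rw [Polynomial.eval_eq_sum_range' hnd]
    simp [Finset.sum_range_succ]
    rfl
  have hderiv : p.derivative.eval xi = b + 2 * c * xi + 3 * d * xi ^ 2 := by
    have h1 : p.derivative.natDegree < 3 := by
      have := Polynomial.natDegree_derivative_lt (p := p)
      rcases Nat.eq_zero_or_pos p.natDegree with h | h
      · simp [Polynomial.natDegree_derivative_le p |>.trans_lt] at *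
        have := Polynomial.natDegree_derivative_le p
        omega
      · have := this (by omega : p.natDegree ≠ 0)
        omega
    rw [Polynomial.eval_eq_sum_range' h1]
    simp [Finset.sum_range_succ, Polynomial.coeff_derivative, a, b, c, d]
    ring
  have key : ∫ x in xi..(xi + Δx), p.eval x =
      (a * (xi + Δx) + b * (xi + Δx)^2 / 2 + c * (xi + Δx)^3 / 3 + d * (xi + Δx)^4 / 4)
      - (a * xi + b * xi^2 / 2 + c * xi^3 / 3 + d * xi^4 / 4) := by
    have : ∀ x ∈ Set.uIcc xi (xi + Δx),
        HasDerivAt (fun y : ℝ => a * y + b * y^2 / 2 + c * y^3 / 3 + d * y^4 / 4)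
          (p.eval x) x := by
      intro x _
      rw [heval]
      have : HasDerivAt (fun y : ℝ => a * y + b * y^2 / 2 + c * y^3 / 3 + d * y^4 / 4)
          (a * 1 + b * (2 * x) / 2 + c * (3 * x ^ 2) / 3 + d * (4 * x ^ 3) / 4) x := by
        apply HasDerivAt.add
        apply HasDerivAt.add
        apply HasDerivAt.add
        · simpa using (hasDerivAt_id x).const_mul a
        · simpa using ((hasDerivAt_pow 2 x).const_mul b).div_const 2
        · simpa using ((hasDerivAt_pow 3 x).const_mul c).div_const 3
        · simpa using ((hasDerivAt_pow 4 x).const_mul d).div_const 4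
      convert this using 1
      push_cast
      ring
    rw [intervalIntegral.integral_eq_sub_of_hasDerivAt this]
    exact (p.continuous_aeval.intervalIntegrable _ _)
  rw [key, heval, heval, heval, hderiv]
  ring
end

section
/- For every real polynomial p of degree at most 3, the integral of p over [x_i, x_{i+1}] equals (Δx/24) · (7·p(x_i) + 16·p(x_{i+1}) + p(x_{i+2}) − 6·Δx·p'(x_{i+1})). (Exactness of the quadrature q₂ obtained from the cubic Hermite interpolant on the small stencil S₂ = {x_i, x_{i+1}, x_{i+2}} with derivative data at x_{i+1}.) -/
/-- Exactness of the quadrature `q₂` obtained from the cubic Hermite interpolant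
on the small stencil `S₂ = {x_i, x_{i+1}, x_{i+2}}` with derivative data at `x_{i+1}`:
for every real polynomial of degree at most 3, the integral over `[x_i, x_{i+1}]`
equals `(Δx/24)(7 p(x_i) + 16 p(x_{i+1}) + p(x_{i+2}) − 6 Δx p'(x_{i+1}))`. -/
theorem hweno6_quadrature_q2_exact (Δx : ℝ) (hΔx : 0 < Δx) (xi : ℝ)
    (p : Polynomial ℝ) (hp : p.degree ≤ 3) :
    ∫ x in xi..(xi + Δx), p.eval x =
      (Δx / 24) *
        (7 * p.eval xi + 16 * p.eval (xi + Δx) + p.eval (xi + 2 * Δx) -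
          6 * Δx * p.derivative.eval (xi + Δx)) := by
  have hnd : p.natDegree < 4 := by
    have h : p.natDegree ≤ 3 := Polynomial.natDegree_le_iff_degree_le.mpr (by exact_mod_cast hp)
    omega
  set a : ℕ → ℝ := fun i => p.coeff i with ha
  have heval : ∀ x : ℝ, p.eval x = a 0 + a 1 * x + a 2 * x ^ 2 + a 3 * x ^ 3 := by
    intro x
    rw [Polynomial.eval_eq_sum_range' hnd]
    simp [Finset.sum_range_succ]
    try ring
  have hdnd : p.derivative.natDegree < 3 := by
    have h := Polynomial.natDegree_derivative_le p
    omega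
  have hderiv : ∀ x : ℝ, p.derivative.eval x = a 1 + 2 * a 2 * x + 3 * a 3 * x ^ 2 := by
    intro x
    rw [Polynomial.eval_eq_sum_range' hdnd]
    simp [Finset.sum_range_succ, Polynomial.coeff_derivative]
    try ring
  have hF : ∀ x : ℝ, HasDerivAt
      (fun x : ℝ => a 0 * x + a 1 / 2 * x ^ 2 + a 2 / 3 * x ^ 3 + a 3 / 4 * x ^ 4)
      (p.eval x) x := by
    intro x
    have h1 : HasDerivAt (fun x : ℝ => x) 1 x := hasDerivAt_id x
    have h2 : HasDerivAt (fun x : ℝ => x ^ 2) (2 * x ^ 1) x := by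
      simpa using hasDerivAt_pow 2 x
    have h3 : HasDerivAt (fun x : ℝ => x ^ 3) (3 * x ^ 2) x := by
      simpa using hasDerivAt_pow 3 x
    have h4 : HasDerivAt (fun x : ℝ => x ^ 4) (4 * x ^ 3) x := by
      simpa using hasDerivAt_pow 4 x
    have := (((h1.const_mul (a 0)).add (h2.const_mul (a 1 / 2))).add
      (h3.const_mul (a 2 / 3))).add (h4.const_mul (a 3 / 4))
    convert this using 1
    · rfl
    · rfl
    · rfl
    · rw [heval x]; ring
  rw [intervalIntegral.integral_eq_sub_of_hasDerivAt (fun x _ => hF x)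
    ((p.continuous_aeval).intervalIntegrable _ _)]
  rw [heval, heval, heval, hderiv]
  ring
end
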